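/- Let P be the transition matrix of an irreducible, aperiodic, reversible Markov chain on a finite state space 𝒳 with stationary distribution π, all entries π(x) > 0. For any choice of paths {δ(x,y)} (a simple E-path for each ordered pair x ≠ y, where E is the edge set of pairs with P(u,v) > 0), the spectral gap satisfies Gap(P) ≥ 1/(ρ(Δ)·ℓ(Δ)), where ℓ(Δ) is the maximum path length and ρ(Δ) = max over edges (u,v) of (1/(π(u)P(u,v))) · Σ_{(x,y): (u,v) ∈ δ(x,y)} π(x)π(y). -/

import Mathlib

open Finset

private lemma cs_range (k : ℕ) (a : ℕ → ℝ) :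
    (∑ i ∈ range k, a i) ^ 2 ≤ (k : ℝ) * ∑ i ∈ range k, a i ^ 2 := by
  simpa using sq_sum_le_card_mul_sum_sq (s := range k) (f := a)

open Classical in
private lemma path_sq_bound {X : Type*} [Fintype X] [DecidableEq X]
    (f : X → ℝ) (L : List X) (x y : X)
    (hh : L.head? = some x) (hl : L.getLast? = some y) (hnd : L.Nodup) :
    (f x - f y) ^ 2 ≤ ((L.length : ℝ) - 1) *
      ∑ u : X, ∑ v : X,
        (if ∃ i : ℕ, L[i]? = some u ∧ L[i + 1]? = some v
          then (f u - f v) ^ 2 else 0) := by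
  have hne : L ≠ [] := by rintro rfl; simp at hh
  set k := L.length - 1 with hk
  have hlen : L.length = k + 1 := (Nat.succ_pred_eq_of_pos (List.length_pos_iff.mpr hne)).symm
  set F : ℕ → X := fun i => L.getD i y with hF
  have hF0 : F 0 = x := by
    cases L with
    | nil => exact absurd rfl hne
    | cons a t => simp [List.head?] at hh; simp [hF, hh, List.getD]
  have hFk : F k = y := by
    have : L[k]? = some y := by
      rw [← hl, List.getLast?_eq_getElem?]
    simp [hF, List.getD_eq_getElem?_getD, this]
  have htel : f x - f y = ∑ i ∈ range k, (f (F i) - f (F (i + 1))) := by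
    rw [Finset.sum_range_sub' (fun i => f (F i)) k, hF0, hFk]
  have hcast : ((L.length : ℝ) - 1) = (k : ℝ) := by
    rw [hlen]; push_cast; ring
  rw [htel, hcast]
  refine (cs_range k _).trans (le_of_eq ?_)
  congr 1
  -- sum over range k equals double sum with indicator
  have hrw : ∀ u v : X, (if ∃ i : ℕ, L[i]? = some u ∧ L[i + 1]? = some v
      then (f u - f v) ^ 2 else 0)
      = (if (∃ i : ℕ, L[i]? = some u ∧ L[i + 1]? = some v)
          then (fun p : X × X => (f p.1 - f p.2) ^ 2) (u, v) else 0) := fun u v => rfl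
  calc ∑ i ∈ range k, (f (F i) - f (F (i + 1))) ^ 2
      = ∑ p ∈ (Finset.univ ×ˢ Finset.univ).filter
          (fun p : X × X => ∃ i : ℕ, L[i]? = some p.1 ∧ L[i + 1]? = some p.2),
          (f p.1 - f p.2) ^ 2 := by
        refine Finset.sum_bij (fun i _ => (F i, F (i + 1))) ?_ ?_ ?_ ?_
        · intro i hi
          rw [Finset.mem_range] at hi
          have h1 : i < L.length := by omega
          have h2 : i + 1 < L.length := by omega
          refine Finset.mem_filter.mpr ⟨Finset.mem_product.mpr ⟨mem_univ _, mem_univ _⟩, i, ?_, ?_⟩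
          · rw [List.getElem?_eq_getElem h1]
            exact congrArg some (List.getD_eq_getElem L y h1).symm
          · rw [List.getElem?_eq_getElem h2]
            exact congrArg some (List.getD_eq_getElem L y h2).symm
        · intro i hi j hj hij
          rw [Finset.mem_range] at hi hj
          have h1 : i < L.length := by omega
          have h2 : j < L.length := by omega
          have heq : L.get ⟨i, h1⟩ = L.get ⟨j, h2⟩ := by
            rw [← List.getD_eq_get L y ⟨i, h1⟩, ← List.getD_eq_get L y ⟨j, h2⟩]
            exact congrArg Prod.fst hij
          have := List.nodup_iff_injective_get.mp hnd heq
          simpa using congrArg Fin.val this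
        · intro p hp
          obtain ⟨-, i, h1, h2⟩ := Finset.mem_filter.mp hp
          obtain ⟨hi1, he1⟩ := List.getElem?_eq_some_iff.mp h1
          obtain ⟨hi2, he2⟩ := List.getElem?_eq_some_iff.mp h2
          refine ⟨i, Finset.mem_range.mpr (by omega), ?_⟩
          have e1 : F i = p.1 := by
            show L.getD i y = p.1; rw [List.getD_eq_getElem L y hi1]; exact he1
          have e2 : F (i + 1) = p.2 := by
            show L.getD (i + 1) y = p.2; rw [List.getD_eq_getElem L y hi2]; exact he2
          show (F i, F (i + 1)) = p
          rw [e1, e2]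
        · intro i hi; rfl
    _ = ∑ p ∈ Finset.univ ×ˢ Finset.univ,
          (if (∃ i : ℕ, L[i]? = some p.1 ∧ L[i + 1]? = some p.2)
            then (f p.1 - f p.2) ^ 2 else 0) := Finset.sum_filter _ _
    _ = ∑ u : X, ∑ v : X,
          (if ∃ i : ℕ, L[i]? = some u ∧ L[i + 1]? = some v
            then (f u - f v) ^ 2 else 0) := by
        rw [← Finset.sum_product']



open Classical in
/-- Sinclair's canonical-path (Poincaré) bound: for every choice of simple
paths between all ordered pairs of distinct states, the variational spectral
gap of a reversible chain satisfies `Gap(P) ≥ 1/(ρ(Δ)·ℓ(Δ))`, stated in the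
equivalent Poincaré form `Var_π(f) ≤ ρ(Δ)·ℓ(Δ)·E(f,f)` for all `f`. -/
theorem stmt_8 {X : Type*} [Fintype X] [DecidableEq X] [Nonempty X]
    (P : Matrix X X ℝ)
    (hPnn : ∀ x y, 0 ≤ P x y) (hProw : ∀ x, ∑ y, P x y = 1)
    (hirr : ∀ x y : X, ∃ m : ℕ, 0 < (P ^ m) x y)
    (haper : ∀ x : X, ∃ m₀ : ℕ, ∀ m ≥ m₀, 0 < (P ^ m) x x)
    (π : X → ℝ) (hπpos : ∀ x, 0 < π x) (hπsum : ∑ x, π x = 1)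
    (hrev : ∀ x y, π x * P x y = π y * P y x)
    -- the path ensemble: a simple E-path `δ x y` for each ordered pair `x ≠ y`
    (δ : X → X → List X)
    (hhead : ∀ x y, x ≠ y → (δ x y).head? = some x)
    (hlast : ∀ x y, x ≠ y → (δ x y).getLast? = some y)
    (hchain : ∀ x y, x ≠ y → (δ x y).Chain' (fun u v => u ≠ v ∧ 0 < P u v))
    (hnodup : ∀ x y, x ≠ y → (δ x y).Nodup)
    -- `ℓ` bounds the path lengths, `ρ` bounds the congestion of every edge
    (ℓ ρ : ℝ)
    (hℓ : ∀ x y, x ≠ y → ((δ x y).length : ℝ) - 1 ≤ ℓ)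
    (hρ : ∀ u v : X, u ≠ v → 0 < P u v →
      (∑ x, ∑ y, if x ≠ y ∧ ∃ i : ℕ, (δ x y)[i]? = some u ∧
            (δ x y)[i + 1]? = some v then π x * π y else 0)
        ≤ ρ * (π u * P u v)) :
    -- Poincaré inequality, i.e. `Gap(P) ≥ 1/(ρ·ℓ)` for the variational gap
    ∀ f : X → ℝ,
      ∑ x, (f x - ∑ y, f y * π y) ^ 2 * π x
        ≤ ρ * ℓ * ((1 / 2) * ∑ x, ∑ y, (f x - f y) ^ 2 * (π x * P x y)) := by
  intro f
  set m : ℝ := ∑ y, f y * π y with hm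
  by_cases hsing : ∀ a b : X, a = b
  · obtain ⟨x0⟩ := ‹Nonempty X›
    have hm0 : m = f x0 := by
      rw [hm, Finset.sum_congr rfl (fun y _ => by rw [congrArg f (hsing y x0)]), ← Finset.mul_sum,
        hπsum, mul_one]
    have hL : ∑ x, (f x - m) ^ 2 * π x = 0 :=
      Finset.sum_eq_zero fun x _ => by rw [hsing x x0, hm0]; ring
    have hR : ∑ x, ∑ y, (f x - f y) ^ 2 * (π x * P x y) = 0 :=
      Finset.sum_eq_zero fun x _ => Finset.sum_eq_zero fun y _ => by
        rw [hsing x x0, hsing y x0]; ring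
    rw [hL, hR]; simp
  · push_neg at hsing
    obtain ⟨a, b, hab⟩ := hsing
    -- ℓ ≥ 0
    have hℓ0 : (0 : ℝ) ≤ ℓ := by
      have h := hℓ a b hab
      have hne : δ a b ≠ [] := by
        intro h'; have := hhead a b hab; rw [h'] at this; simp at this
      have : 1 ≤ (δ a b).length := List.length_pos_iff.mpr hne
      have : (1 : ℝ) ≤ ((δ a b).length : ℝ) := by exact_mod_cast this
      linarith
    set S2 : ℝ := ∑ x, f x ^ 2 * π x with hS2
    -- variance identity
    have hvar : ∑ x, (f x - m) ^ 2 * π x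
        = (1 / 2) * ∑ x, ∑ y, (f x - f y) ^ 2 * (π x * π y) := by
      have hLHS : ∑ x, (f x - m) ^ 2 * π x = S2 - m ^ 2 := by
        calc ∑ x, (f x - m) ^ 2 * π x
            = ∑ x, (f x ^ 2 * π x - (f x * π x) * (2 * m) + π x * m ^ 2) :=
              Finset.sum_congr rfl fun x _ => by ring
          _ = (∑ x, f x ^ 2 * π x) - (∑ x, f x * π x) * (2 * m) + (∑ x, π x) * m ^ 2 := by
              rw [Finset.sum_add_distrib, Finset.sum_sub_distrib, ← Finset.sum_mul,
                ← Finset.sum_mul]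
          _ = S2 - m ^ 2 := by rw [hπsum, ← hm, ← hS2]; ring
      have hinner : ∀ x : X, ∑ y, (f x - f y) ^ 2 * (π x * π y)
          = f x ^ 2 * π x - (f x * π x) * (2 * m) + π x * S2 := by
        intro x
        calc ∑ y, (f x - f y) ^ 2 * (π x * π y)
            = ∑ y, (f x ^ 2 * π x * π y - 2 * (f x * π x) * (f y * π y)
                + π x * (f y ^ 2 * π y)) := Finset.sum_congr rfl fun y _ => by ring
          _ = f x ^ 2 * π x * (∑ y, π y) - 2 * (f x * π x) * (∑ y, f y * π y)
                + π x * ∑ y, f y ^ 2 * π y := by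
              rw [Finset.sum_add_distrib, Finset.sum_sub_distrib, ← Finset.mul_sum,
                ← Finset.mul_sum, ← Finset.mul_sum]
          _ = f x ^ 2 * π x - (f x * π x) * (2 * m) + π x * S2 := by
              rw [hπsum, ← hm, ← hS2]; ring
      have hRHS : ∑ x, ∑ y, (f x - f y) ^ 2 * (π x * π y) = 2 * S2 - 2 * m ^ 2 := by
        calc ∑ x, ∑ y, (f x - f y) ^ 2 * (π x * π y)
            = ∑ x, (f x ^ 2 * π x - (f x * π x) * (2 * m) + π x * S2) :=
              Finset.sum_congr rfl fun x _ => hinner x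
          _ = (∑ x, f x ^ 2 * π x) - (∑ x, f x * π x) * (2 * m) + (∑ x, π x) * S2 := by
              rw [Finset.sum_add_distrib, Finset.sum_sub_distrib, ← Finset.sum_mul,
                ← Finset.sum_mul]
          _ = 2 * S2 - 2 * m ^ 2 := by rw [hπsum, ← hm, ← hS2]; ring
      rw [hLHS, hRHS]; ring
    -- termwise path bound
    have key : ∀ x y : X, (f x - f y) ^ 2 * (π x * π y)
        ≤ ℓ * ∑ u, ∑ v, (if x ≠ y ∧ ∃ i : ℕ, (δ x y)[i]? = some u ∧
            (δ x y)[i + 1]? = some v then (f u - f v) ^ 2 * (π x * π y) else 0) := by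
      intro x y
      by_cases hxy : x = y
      · subst hxy
        simp
      · have h1 := path_sq_bound f (δ x y) x y (hhead x y hxy) (hlast x y hxy) (hnodup x y hxy)
        set S : ℝ := ∑ u : X, ∑ v : X,
          (if ∃ i : ℕ, (δ x y)[i]? = some u ∧ (δ x y)[i + 1]? = some v
            then (f u - f v) ^ 2 else 0) with hS
        have hS0 : 0 ≤ S := Finset.sum_nonneg fun u _ => Finset.sum_nonneg fun v _ => by
          split <;> positivity
        have h2 : (f x - f y) ^ 2 ≤ ℓ * S :=
          h1.trans (mul_le_mul_of_nonneg_right (hℓ x y hxy) hS0)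
        have h3 : 0 ≤ π x * π y := le_of_lt (mul_pos (hπpos x) (hπpos y))
        calc (f x - f y) ^ 2 * (π x * π y) ≤ (ℓ * S) * (π x * π y) :=
              mul_le_mul_of_nonneg_right h2 h3
          _ = ℓ * ∑ u, ∑ v, (if x ≠ y ∧ ∃ i : ℕ, (δ x y)[i]? = some u ∧
                (δ x y)[i + 1]? = some v then (f u - f v) ^ 2 * (π x * π y) else 0) := by
              rw [mul_assoc]
              congr 1
              rw [hS, Finset.sum_mul]
              refine Finset.sum_congr rfl fun u _ => ?_
              rw [Finset.sum_mul]
              refine Finset.sum_congr rfl fun v _ => ?_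
              rw [ite_mul, zero_mul]
              exact if_congr (by simp [hxy]) rfl rfl
    -- congestion per edge
    have edge : ∀ u v : X, (f u - f v) ^ 2 *
        (∑ x, ∑ y, (if x ≠ y ∧ ∃ i : ℕ, (δ x y)[i]? = some u ∧
            (δ x y)[i + 1]? = some v then π x * π y else 0))
        ≤ ρ * ((f u - f v) ^ 2 * (π u * P u v)) := by
      intro u v
      by_cases huv : u = v
      · subst huv; simp
      · by_cases hP : 0 < P u v
        · calc (f u - f v) ^ 2 * _ ≤ (f u - f v) ^ 2 * (ρ * (π u * P u v)) :=
              mul_le_mul_of_nonneg_left (hρ u v huv hP) (sq_nonneg _)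
            _ = ρ * ((f u - f v) ^ 2 * (π u * P u v)) := by ring
        · have hW : (∑ x, ∑ y, (if x ≠ y ∧ ∃ i : ℕ, (δ x y)[i]? = some u ∧
              (δ x y)[i + 1]? = some v then π x * π y else 0)) = 0 := by
            refine Finset.sum_eq_zero fun x _ => Finset.sum_eq_zero fun y _ => ?_
            rw [if_neg]
            rintro ⟨hxy, i, h1, h2⟩
            obtain ⟨hi1, he1⟩ := List.getElem?_eq_some_iff.mp h1
            obtain ⟨hi2, he2⟩ := List.getElem?_eq_some_iff.mp h2
            have hlt : i < (δ x y).length - 1 := by omega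
            have := List.IsChain.getElem (hchain x y hxy) i (by omega)
            rw [he1, he2] at this
            exact hP this.2
          have hPz : P u v = 0 := le_antisymm (not_lt.mp hP) (hPnn u v)
          rw [hW, hPz]
          simp
    -- put everything together
    rw [hvar]
    have step1 : (1 / 2 : ℝ) * ∑ x, ∑ y, (f x - f y) ^ 2 * (π x * π y)
        ≤ (1 / 2) * ∑ x, ∑ y, ℓ * ∑ u, ∑ v,
            (if x ≠ y ∧ ∃ i : ℕ, (δ x y)[i]? = some u ∧
              (δ x y)[i + 1]? = some v then (f u - f v) ^ 2 * (π x * π y) else 0) := by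
      have := Finset.sum_le_sum (s := (univ : Finset X)) fun x _ =>
        Finset.sum_le_sum (s := (univ : Finset X)) fun y _ => key x y
      linarith
    have swap : ∑ x, ∑ y, ℓ * ∑ u, ∑ v,
          (if x ≠ y ∧ ∃ i : ℕ, (δ x y)[i]? = some u ∧
            (δ x y)[i + 1]? = some v then (f u - f v) ^ 2 * (π x * π y) else 0)
        = ℓ * ∑ u, ∑ v, (f u - f v) ^ 2 *
            (∑ x, ∑ y, (if x ≠ y ∧ ∃ i : ℕ, (δ x y)[i]? = some u ∧
              (δ x y)[i + 1]? = some v then π x * π y else 0)) := by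
      simp only [← Finset.mul_sum]
      congr 1
      calc ∑ x, ∑ y, ∑ u, ∑ v : X,
            (if x ≠ y ∧ ∃ i : ℕ, (δ x y)[i]? = some u ∧
              (δ x y)[i + 1]? = some v then (f u - f v) ^ 2 * (π x * π y) else 0)
          = ∑ x, ∑ u, ∑ y, ∑ v : X,
            (if x ≠ y ∧ ∃ i : ℕ, (δ x y)[i]? = some u ∧
              (δ x y)[i + 1]? = some v then (f u - f v) ^ 2 * (π x * π y) else 0) :=
            Finset.sum_congr rfl fun x _ => Finset.sum_comm
        _ = ∑ u, ∑ x, ∑ y, ∑ v : X,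
            (if x ≠ y ∧ ∃ i : ℕ, (δ x y)[i]? = some u ∧
              (δ x y)[i + 1]? = some v then (f u - f v) ^ 2 * (π x * π y) else 0) :=
            Finset.sum_comm
        _ = ∑ u, ∑ x, ∑ v, ∑ y : X,
            (if x ≠ y ∧ ∃ i : ℕ, (δ x y)[i]? = some u ∧
              (δ x y)[i + 1]? = some v then (f u - f v) ^ 2 * (π x * π y) else 0) :=
            Finset.sum_congr rfl fun u _ => Finset.sum_congr rfl fun x _ => Finset.sum_comm
        _ = ∑ u, ∑ v, ∑ x, ∑ y : X,
            (if x ≠ y ∧ ∃ i : ℕ, (δ x y)[i]? = some u ∧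
              (δ x y)[i + 1]? = some v then (f u - f v) ^ 2 * (π x * π y) else 0) :=
            Finset.sum_congr rfl fun u _ => Finset.sum_comm
        _ = ∑ u, ∑ v, (f u - f v) ^ 2 *
            (∑ x, ∑ y, (if x ≠ y ∧ ∃ i : ℕ, (δ x y)[i]? = some u ∧
              (δ x y)[i + 1]? = some v then π x * π y else 0)) := by
            refine Finset.sum_congr rfl fun u _ => Finset.sum_congr rfl fun v _ => ?_
            rw [Finset.mul_sum]
            refine Finset.sum_congr rfl fun x _ => ?_
            rw [Finset.mul_sum]
            refine Finset.sum_congr rfl fun y _ => ?_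
            rw [mul_ite, mul_zero]
    have step2 : (1 / 2 : ℝ) * (ℓ * ∑ u, ∑ v, (f u - f v) ^ 2 *
            (∑ x, ∑ y, (if x ≠ y ∧ ∃ i : ℕ, (δ x y)[i]? = some u ∧
              (δ x y)[i + 1]? = some v then π x * π y else 0)))
        ≤ (1 / 2) * (ℓ * ∑ u, ∑ v, ρ * ((f u - f v) ^ 2 * (π u * P u v))) := by
      have hsum := Finset.sum_le_sum (s := (univ : Finset X)) fun u _ =>
        Finset.sum_le_sum (s := (univ : Finset X)) fun v _ => edge u v
      have := mul_le_mul_of_nonneg_left hsum hℓ0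
      linarith
    have final : (1 / 2 : ℝ) * (ℓ * ∑ u, ∑ v, ρ * ((f u - f v) ^ 2 * (π u * P u v)))
        = ρ * ℓ * ((1 / 2) * ∑ x, ∑ y, (f x - f y) ^ 2 * (π x * P x y)) := by
      simp only [← Finset.mul_sum]
      ring
    calc (1 / 2 : ℝ) * ∑ x, ∑ y, (f x - f y) ^ 2 * (π x * π y)
        ≤ (1 / 2) * ∑ x, ∑ y, ℓ * ∑ u, ∑ v,
            (if x ≠ y ∧ ∃ i : ℕ, (δ x y)[i]? = some u ∧
              (δ x y)[i + 1]? = some v then (f u - f v) ^ 2 * (π x * π y) else 0) := step1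
      _ = (1 / 2) * (ℓ * ∑ u, ∑ v, (f u - f v) ^ 2 *
            (∑ x, ∑ y, (if x ≠ y ∧ ∃ i : ℕ, (δ x y)[i]? = some u ∧
              (δ x y)[i + 1]? = some v then π x * π y else 0))) := by rw [swap]
      _ ≤ (1 / 2) * (ℓ * ∑ u, ∑ v, ρ * ((f u - f v) ^ 2 * (π u * P u v))) := step2
      _ = ρ * ℓ * ((1 / 2) * ∑ x, ∑ y, (f x - f y) ^ 2 * (π x * P x y)) := final
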